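/- arXiv:1508.04272 — 5 statements merged into one kernel-verified Lean document; each statement's English description precedes it below -/
import Mathlib

section
/- Define Φ(3, N) = 2^N - 1, Φ(p, 1) = 1, and for p ≥ 4, N ≥ 2, Φ(p, N) = min over 1 ≤ ℓ < N of 2Φ(p, ℓ) + Φ(p-1, N-ℓ). Then for all p ≥ 3 and N ≥ 1, Φ(p, N) = Σ_{n=0}^{N-1} 2^{∇_p(n)}, where ∇_p(n) = max{k ≥ 0 : C(k+p-3, p-2) ≤ n}. -/
/-- The Frame–Stewart numbers: `Φ(3, N) = 2^N - 1`, `Φ(p, 1) = 1`, and for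
`p ≥ 4`, `N ≥ 2`, `Φ(p, N) = min_{1 ≤ ℓ < N} (2Φ(p, ℓ) + Φ(p-1, N-ℓ))`.
(Junk values for `p < 3` or `N = 0`.) -/
def Phi : ℕ → ℕ → ℕ
  | _, 0 => 0
  | 0, _ + 1 => 0
  | 1, _ + 1 => 0
  | 2, _ + 1 => 0
  | 3, N + 1 => 2 ^ (N + 1) - 1
  | _ + 4, 1 => 1
  | p + 4, N + 2 =>
    (Finset.Icc 1 (N + 1)).attach.inf'
      (by simp [Finset.attach_nonempty_iff, Finset.nonempty_Icc])
      (fun l => 2 * Phi (p + 4) l.1 + Phi (p + 3) (N + 2 - l.1))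
termination_by p N => (p, N)
decreasing_by
  · have hl := l.2
    simp only [Finset.mem_Icc] at hl
    exact Prod.Lex.right _ (by omega)
  · exact Prod.Lex.left _ _ (by omega)

/-- `Δ_p(k) := C(k+p-3, p-2)`. -/
def Delta (p k : ℕ) : ℕ := Nat.choose (k + p - 3) (p - 2)

/-- `∇_p(n) := max{k ≥ 0 : Δ_p(k) ≤ n}`. -/
def nabla (p n : ℕ) : ℕ := Nat.findGreatest (fun k => Delta p k ≤ n) n

namespace FS

def S (p N : ℕ) : ℕ := ∑ n ∈ Finset.range N, 2 ^ nabla p n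

def c (p k : ℕ) : ℕ := Nat.choose (k + p - 3) (p - 3)

lemma S_zero (p : ℕ) : S p 0 = 0 := rfl

lemma S_succ (p N : ℕ) : S p (N + 1) = S p N + 2 ^ nabla p N :=
  Finset.sum_range_succ _ _

lemma delta_zero (hp : 3 ≤ p) : Delta p 0 = 0 := by
  obtain ⟨q, rfl⟩ : ∃ q, p = q + 3 := ⟨p - 3, by omega⟩
  simp only [Delta]
  have h1 : 0 + (q + 3) - 3 = q := by omega
  have h2 : q + 3 - 2 = q + 1 := by omega
  rw [h1, h2, Nat.choose_eq_zero_of_lt (by omega)]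

lemma c_pos (hp : 3 ≤ p) (k : ℕ) : 0 < c p k := by
  obtain ⟨q, rfl⟩ : ∃ q, p = q + 3 := ⟨p - 3, by omega⟩
  simp only [c]
  have h1 : k + (q + 3) - 3 = k + q := by omega
  have h2 : q + 3 - 3 = q := by omega
  rw [h1, h2]
  exact Nat.choose_pos (by omega)

lemma delta_succ (hp : 3 ≤ p) (k : ℕ) : Delta p (k + 1) = Delta p k + c p k := by
  obtain ⟨q, rfl⟩ : ∃ q, p = q + 3 := ⟨p - 3, by omega⟩
  simp only [Delta, c]
  have h1 : k + 1 + (q + 3) - 3 = (k + q) + 1 := by omega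
  have h2 : q + 3 - 2 = q + 1 := by omega
  have h3 : k + (q + 3) - 3 = k + q := by omega
  have h4 : q + 3 - 3 = q := by omega
  rw [h1, h2, h3, h4, Nat.choose_succ_succ']
  omega

lemma delta_one (hp : 3 ≤ p) : Delta p 1 = 1 := by
  rw [delta_succ hp 0, delta_zero hp]
  obtain ⟨q, rfl⟩ : ∃ q, p = q + 3 := ⟨p - 3, by omega⟩
  simp only [c]
  have h1 : 0 + (q + 3) - 3 = q := by omega
  have h2 : q + 3 - 3 = q := by omega
  rw [h1, h2, Nat.choose_self]

lemma delta_strictMono (hp : 3 ≤ p) : StrictMono (Delta p) :=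
  strictMono_nat_of_lt_succ fun k => by
    rw [delta_succ hp k]; have := c_pos hp k; omega

lemma le_delta (hp : 3 ≤ p) (k : ℕ) : k ≤ Delta p k := by
  induction k with
  | zero => exact Nat.zero_le _
  | succ k ih => rw [delta_succ hp k]; have := c_pos hp k; omega

lemma c_pascal (hp : 4 ≤ p) (k : ℕ) : c p (k + 1) = c (p - 1) (k + 1) + c p k := by
  obtain ⟨q, rfl⟩ : ∃ q, p = q + 4 := ⟨p - 4, by omega⟩
  simp only [c]
  have h1 : k + 1 + (q + 4) - 3 = (k + q + 1) + 1 := by omega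
  have h2 : q + 4 - 3 = q + 1 := by omega
  have h3 : q + 4 - 1 = q + 3 := by omega
  have h4 : k + 1 + (q + 3) - 3 = k + q + 1 := by omega
  have h5 : q + 3 - 3 = q := by omega
  have h6 : k + (q + 4) - 3 = k + q + 1 := by omega
  rw [h1, h2, h3, h4, h5, h6, Nat.choose_succ_succ']

lemma delta_pascal (hp : 4 ≤ p) (k : ℕ) :
    Delta p (k + 1) = Delta p k + Delta (p - 1) (k + 1) := by
  obtain ⟨q, rfl⟩ : ∃ q, p = q + 4 := ⟨p - 4, by omega⟩
  simp only [Delta]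
  have h1 : k + 1 + (q + 4) - 3 = (k + q + 1) + 1 := by omega
  have h2 : q + 4 - 2 = (q + 1) + 1 := by omega
  have h3 : k + (q + 4) - 3 = k + q + 1 := by omega
  have h4 : q + 4 - 1 = q + 3 := by omega
  have h5 : k + 1 + (q + 3) - 3 = k + q + 1 := by omega
  have h6 : q + 3 - 2 = q + 1 := by omega
  rw [h1, h2, h3, h4, h5, h6, Nat.choose_succ_succ']
  omega

lemma delta_nabla_le (hp : 3 ≤ p) (n : ℕ) : Delta p (nabla p n) ≤ n := by
  have h0 : Delta p 0 ≤ n := by rw [delta_zero hp]; exact Nat.zero_le n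
  exact Nat.findGreatest_spec (P := fun k => Delta p k ≤ n) (Nat.zero_le n) h0

lemma le_nabla (hp : 3 ≤ p) {k n : ℕ} (h : Delta p k ≤ n) : k ≤ nabla p n :=
  Nat.le_findGreatest (P := fun j => Delta p j ≤ n) (le_trans (le_delta hp k) h) h

lemma lt_delta_nabla_succ (hp : 3 ≤ p) (n : ℕ) : n < Delta p (nabla p n + 1) := by
  by_contra h
  push_neg at h
  have h2 := le_nabla hp h
  omega

lemma nabla_lt_of_lt_delta (hp : 3 ≤ p) {k n : ℕ} (h : n < Delta p k) :
    nabla p n < k := by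
  by_contra hc
  push_neg at hc
  have := (delta_strictMono hp).monotone hc
  have := delta_nabla_le hp n
  omega

lemma nabla_eq (hp : 3 ≤ p) {k n : ℕ} (h1 : Delta p k ≤ n) (h2 : n < Delta p (k + 1)) :
    nabla p n = k := by
  have ha := le_nabla hp h1
  have hb := nabla_lt_of_lt_delta hp h2
  omega

lemma nabla_mono (hp : 3 ≤ p) {m n : ℕ} (h : m ≤ n) : nabla p m ≤ nabla p n :=
  le_nabla hp (le_trans (delta_nabla_le hp m) h)

lemma S_block (hp : 3 ≤ p) (k : ℕ) {t : ℕ} (ht : t ≤ c p k) :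
    S p (Delta p k + t) = S p (Delta p k) + t * 2 ^ k := by
  induction t with
  | zero => simp
  | succ t ih =>
    have ht' : t ≤ c p k := by omega
    have hn : nabla p (Delta p k + t) = k := by
      refine nabla_eq hp (by omega) ?_
      rw [delta_succ hp k]; omega
    have : Delta p k + (t + 1) = (Delta p k + t) + 1 := by omega
    rw [this, S_succ, ih ht', hn]
    ring

lemma S_delta_succ (hp : 3 ≤ p) (k : ℕ) :
    S p (Delta p (k + 1)) = S p (Delta p k) + c p k * 2 ^ k := by
  rw [delta_succ hp k, S_block hp k le_rfl]

lemma S_one (hp : 3 ≤ p) : S p 1 = 1 := by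
  have h0 : nabla p 0 = 0 :=
    nabla_eq hp (by rw [delta_zero hp]) (by rw [delta_one hp]; omega)
  rw [S_succ, S_zero, h0]
  norm_num

lemma key_full (hp : 4 ≤ p) (k : ℕ) :
    2 * S p (Delta p k) + S (p - 1) (Delta (p - 1) (k + 1)) = S p (Delta p (k + 1)) := by
  have hp3 : 3 ≤ p := by omega
  have hp3' : 3 ≤ p - 1 := by omega
  induction k with
  | zero =>
    rw [delta_zero hp3, delta_one hp3, delta_one hp3', S_zero, S_one hp3, S_one hp3']
  | succ k ih =>
    have e1 := S_delta_succ hp3 (k + 1)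
    have e2 := S_delta_succ hp3 k
    have e3 := S_delta_succ hp3' (k + 1)
    have e5 : c p (k + 1) * 2 ^ (k + 1) =
        c (p - 1) (k + 1) * 2 ^ (k + 1) + 2 * (c p k * 2 ^ k) := by
      rw [c_pascal hp k]; ring
    omega

lemma key (hp : 4 ≤ p) {N : ℕ} (hN : 2 ≤ N) :
    ∃ l, 1 ≤ l ∧ l < N ∧ 2 * S p l + S (p - 1) (N - l) = S p N ∧
      ∀ j, j ≤ N → S p N ≤ 2 * S p j + S (p - 1) (N - j) := by
  have hp3 : 3 ≤ p := by omega
  have hp3' : 3 ≤ p - 1 := by omega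
  have hk1 : 1 ≤ nabla p (N - 1) := le_nabla hp3 (by rw [delta_one hp3]; omega)
  obtain ⟨k', hk⟩ : ∃ k', nabla p (N - 1) = k' + 1 := ⟨nabla p (N - 1) - 1, by omega⟩
  have hΔle : Delta p (k' + 1) ≤ N - 1 := hk ▸ delta_nabla_le hp3 _
  have hΔlt : N - 1 < Delta p (k' + 1 + 1) := hk ▸ lt_delta_nabla_succ hp3 _
  have hΔsucc : Delta p (k' + 1 + 1) = Delta p (k' + 1) + c p (k' + 1) := delta_succ hp3 _
  set t := N - Delta p (k' + 1) with htdef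
  have ht1 : 1 ≤ t := by omega
  have htc : t ≤ c p (k' + 1) := by omega
  set t1 := min t (c p k') with ht1def
  set t2 := t - t1 with ht2def
  have ht1pos : 1 ≤ t1 := by
    have := c_pos hp3 k'; omega
  have ht1c : t1 ≤ c p k' := min_le_right _ _
  have ht2c : t2 ≤ c (p - 1) (k' + 1) := by
    have hcp := c_pascal hp k'
    omega
  set l := Delta p k' + t1 with hldef
  have hsplit : Delta p (k' + 1) = Delta p k' + Delta (p - 1) (k' + 1) :=
    delta_pascal hp k'
  have hm : N - l = Delta (p - 1) (k' + 1) + t2 := by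
    have := le_delta hp3 k'
    omega
  have hΔ'succ : Delta (p - 1) (k' + 2) = Delta (p - 1) (k' + 1) + c (p - 1) (k' + 1) :=
    delta_succ hp3' (k' + 1)
  have hΔ'pos : 1 ≤ Delta (p - 1) (k' + 1) := by
    have h1 := delta_one hp3'
    have := (delta_strictMono hp3').monotone (show 1 ≤ k' + 1 by omega)
    omega
  have hl1 : 1 ≤ l := by omega
  have hlN : l < N := by omega
  have hΔpsucc : Delta p (k' + 1) = Delta p k' + c p k' := delta_succ hp3 k'
  have heq : 2 * S p l + S (p - 1) (N - l) = S p N := by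
    have e1 : S p l = S p (Delta p k') + t1 * 2 ^ k' := S_block hp3 k' ht1c
    have e2 : S (p - 1) (N - l) =
        S (p - 1) (Delta (p - 1) (k' + 1)) + 2 * (t2 * 2 ^ k') := by
      rw [hm, S_block hp3' (k' + 1) ht2c]; ring
    have e3 : S p N = S p (Delta p (k' + 1)) + 2 * (t * 2 ^ k') := by
      have hN' : N = Delta p (k' + 1) + t := by omega
      rw [hN', S_block hp3 (k' + 1) htc]; ring
    have e4 := key_full hp k'
    have et : t1 + t2 = t := by omega
    have emul : t1 * 2 ^ k' + t2 * 2 ^ k' = t * 2 ^ k' := by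
      rw [← et]; ring
    omega
  refine ⟨l, hl1, hlN, heq, ?_⟩
  · -- minimality
    intro j hj
    set f : ℕ → ℕ := fun j => 2 * S p j + S (p - 1) (N - j) with hf
    have hfl : f l = S p N := heq
    rw [← hfl]
    show f l ≤ f j
    have fstep : ∀ i, i < N →
        f (i + 1) + 2 ^ nabla (p - 1) (N - 1 - i) = f i + 2 * 2 ^ nabla p i := by
      intro i hi
      have h1 : N - i = (N - 1 - i) + 1 := by omega
      have h2 : N - (i + 1) = N - 1 - i := by omega
      simp only [hf, S_succ, h1, h2]
      ring
    have hdown : ∀ i, i < l → f (i + 1) ≤ f i := by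
      intro i hi
      have hnab1 : nabla p i < k' + 1 := nabla_lt_of_lt_delta hp3 (by omega)
      have hnab2 : k' + 1 ≤ nabla (p - 1) (N - 1 - i) := le_nabla hp3' (by omega)
      have hpow : 2 * 2 ^ nabla p i ≤ 2 ^ nabla (p - 1) (N - 1 - i) := by
        calc 2 * 2 ^ nabla p i = 2 ^ (nabla p i + 1) := by ring
        _ ≤ 2 ^ nabla (p - 1) (N - 1 - i) :=
            Nat.pow_le_pow_right (by omega) (by omega)
      have := fstep i (by omega)
      omega
    have hup : ∀ i, l ≤ i → i < N → f i ≤ f (i + 1) := by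
      intro i hil hiN
      have hnab1 : k' ≤ nabla p i := le_nabla hp3 (by omega)
      have hnab2 : nabla (p - 1) (N - 1 - i) < k' + 2 := by
        apply nabla_lt_of_lt_delta hp3'
        have : N - 1 - i ≤ N - 1 - l := by omega
        have : N - 1 - l < Delta (p - 1) (k' + 2) := by omega
        omega
      have hpow : 2 ^ nabla (p - 1) (N - 1 - i) ≤ 2 * 2 ^ nabla p i := by
        calc 2 ^ nabla (p - 1) (N - 1 - i) ≤ 2 ^ (nabla p i + 1) :=
            Nat.pow_le_pow_right (by omega) (by omega)
        _ = 2 * 2 ^ nabla p i := by ring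
      have := fstep i hiN
      omega
    have A : ∀ d, d ≤ l → f l ≤ f (l - d) := by
      intro d
      induction d with
      | zero => simp
      | succ d ih =>
        intro hd
        have h1 : f l ≤ f (l - d) := ih (by omega)
        have h2 := hdown (l - (d + 1)) (by omega)
        have h3 : l - (d + 1) + 1 = l - d := by omega
        rw [h3] at h2
        omega
    have B : ∀ d, l + d ≤ N → f l ≤ f (l + d) := by
      intro d
      induction d with
      | zero => simp
      | succ d ih =>
        intro hd
        have h1 : f l ≤ f (l + d) := ih (by omega)
        have h2 := hup (l + d) (by omega) (by omega)
        have h3 : l + d + 1 = l + (d + 1) := by omega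
        rw [h3] at h2
        omega
    rcases le_or_gt j l with hjl | hjl
    · have := A (l - j) (by omega)
      rw [show l - (l - j) = j by omega] at this
      exact this
    · have := B (j - l) (by omega)
      rw [show l + (j - l) = j by omega] at this
      exact this

lemma S_three (N : ℕ) : S 3 N = 2 ^ N - 1 := by
  have hnab : ∀ n, nabla 3 n = n := by
    intro n
    have hΔ : ∀ m, Delta 3 m = m := by
      intro m; simp [Delta, Nat.choose_one_right]
    exact nabla_eq (by omega) (by rw [hΔ]) (by rw [hΔ]; omega)
  induction N with
  | zero => rfl
  | succ N ih =>
    rw [S_succ, ih, hnab]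
    have : 1 ≤ 2 ^ N := Nat.one_le_two_pow
    rw [pow_succ]
    omega

lemma phi_eq_S : ∀ p, 3 ≤ p → ∀ N, Phi p N = S p N := by
  intro p
  induction p with
  | zero => omega
  | succ p IH =>
    intro hp N
    rcases eq_or_lt_of_le hp with h3 | h4
    · -- p + 1 = 3
      rw [← h3]
      cases N with
      | zero => rw [S_zero]; simp [Phi]
      | succ N => rw [S_three]; simp [Phi]
    · -- p + 1 ≥ 4
      obtain ⟨q, hq⟩ : ∃ q, p + 1 = q + 4 := ⟨p - 3, by omega⟩
      rw [show p = q + 3 by omega] at IH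
      rw [hq]
      have IH' : ∀ M, Phi (q + 3) M = S (q + 3) M := IH (by omega)
      induction N using Nat.strong_induction_on with
      | _ N IHN =>
        obtain _ | _ | M := N
        · rw [S_zero]; simp [Phi]
        · rw [S_one (by omega)]; simp [Phi]
        · show Phi (q + 4) (M + 2) = S (q + 4) (M + 2)
          rw [Phi]
          apply le_antisymm
          · obtain ⟨l, hl1, hlN, heq, _⟩ := key (p := q + 4) (by omega) (N := M + 2) (by omega)
            have hmem : l ∈ Finset.Icc 1 (M + 1) := by
              rw [Finset.mem_Icc]; omega
            refine le_trans (Finset.inf'_le _ (Finset.mem_attach _ ⟨l, hmem⟩)) ?_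
            rw [IHN l (by omega)]
            show 2 * S (q + 4) l + Phi (q + 4 - 1) (M + 2 - l) ≤ _
            rw [show q + 4 - 1 = q + 3 from rfl, IH']
            rw [show (q + 4 : ℕ) - 1 = q + 3 from rfl] at heq
            omega
          · obtain ⟨l, _, _, _, hge⟩ := key (p := q + 4) (by omega) (N := M + 2) (by omega)
            apply Finset.le_inf'
            rintro ⟨j, hj⟩ -
            rw [Finset.mem_Icc] at hj
            rw [IHN j (by omega)]
            show _ ≤ 2 * S (q + 4) j + Phi (q + 4 - 1) (M + 2 - j)
            rw [show q + 4 - 1 = q + 3 from rfl, IH']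
            have := hge j (by omega)
            rw [show (q + 4 : ℕ) - 1 = q + 3 from rfl] at this
            omega

end FS

/-- For all `p ≥ 3` and `N ≥ 1`, `Φ(p, N) = Σ_{n=0}^{N-1} 2^{∇_p(n)}`. -/



theorem phi_eq_sum (p N : ℕ) (hp : 3 ≤ p) (hN : 1 ≤ N) :
    Phi p N = ∑ n ∈ Finset.range N, 2 ^ nabla p n :=
  FS.phi_eq_S p hp N
end

section
/- Let N ≥ 1 and write N - 1 = C(m+1, 2) + t with 0 ≤ t ≤ m (this decomposition exists and is unique). Then Φ(4, N) = 1 + (m+t)·2^m, where Φ(4, N) = Σ_{n=0}^{N-1} 2^{∇_4(n)} and ∇_4(n) = max{k ≥ 0 : C(k+1, 2) ≤ n}. -/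
/-- `∇_4(n) := max{k ≥ 0 : C(k+1, 2) ≤ n}`. -/
def nabla4 (n : ℕ) : ℕ := Nat.findGreatest (fun k => Nat.choose (k + 1) 2 ≤ n) n

/-- `Φ(4, N) := Σ_{n=0}^{N-1} 2^{∇_4(n)}`. -/
def Phi4 (N : ℕ) : ℕ := ∑ n ∈ Finset.range N, 2 ^ nabla4 n

lemma tri_succ (m : ℕ) : Nat.choose (m + 2) 2 = Nat.choose (m + 1) 2 + (m + 1) := by
  rw [Nat.choose_succ_succ (m+1) 1, Nat.choose_one_right, Nat.add_comm]

lemma tri_ge (m : ℕ) : m ≤ Nat.choose (m + 1) 2 := by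
  induction m with
  | zero => simp
  | succ k ih => rw [tri_succ]; omega

lemma nabla4_eq (m t : ℕ) (htm : t ≤ m) : nabla4 (Nat.choose (m+1) 2 + t) = m := by
  unfold nabla4
  rw [Nat.findGreatest_eq_iff]
  refine ⟨by have := tri_ge m; omega, fun _ => by omega, fun k hk _ hP => ?_⟩
  have h1 : Nat.choose (m+2) 2 ≤ Nat.choose (k+1) 2 :=
    Nat.choose_le_choose 2 (by omega)
  rw [tri_succ] at h1
  omega

lemma phi4_aux (m : ℕ) : ∀ t ≤ m, Phi4 (Nat.choose (m+1) 2 + t + 1) = 1 + (m + t) * 2 ^ m := by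
  induction m with
  | zero =>
    intro t ht
    interval_cases t
    simp [Phi4, nabla4]
  | succ k ih =>
    have base : Phi4 (Nat.choose (k+2) 2 + 1) = 1 + (k + 1) * 2 ^ (k + 1) := by
      have h1 := ih k le_rfl
      rw [tri_succ]
      have : Nat.choose (k+1) 2 + (k+1) + 1 = (Nat.choose (k+1) 2 + k + 1) + 1 := by ring
      rw [this, Phi4, Finset.sum_range_succ, ← Phi4]
      have he : Nat.choose (k+1) 2 + k + 1 = Nat.choose (k+2) 2 + 0 := by rw [tri_succ]; ring
      rw [he, nabla4_eq (k+1) 0 (by omega), ← he, h1]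
      ring
    intro t ht
    induction t with
    | zero => simpa using base
    | succ s ihs =>
      have hs : s ≤ k + 1 := by omega
      have h1 := ihs hs
      have : Nat.choose (k+2) 2 + (s+1) + 1 = (Nat.choose (k+2) 2 + s + 1) + 1 := by ring
      rw [this, Phi4, Finset.sum_range_succ, ← Phi4, h1]
      have he : Nat.choose (k+2) 2 + s + 1 = Nat.choose (k+2) 2 + (s+1) := by ring
      rw [he, nabla4_eq (k+1) (s+1) ht]
      ring

/-- If `N ≥ 1` and `N - 1 = C(m+1, 2) + t` with `0 ≤ t ≤ m`, then
`Φ(4, N) = 1 + (m+t)·2^m`. -/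
theorem phi4_closed_form (N m t : ℕ) (hN : 1 ≤ N)
    (hdec : N - 1 = Nat.choose (m + 1) 2 + t) (htm : t ≤ m) :
    Phi4 N = 1 + (m + t) * 2 ^ m := by
  have hNe : N = Nat.choose (m + 1) 2 + t + 1 := by omega
  rw [hNe]
  exact phi4_aux m t htm
end

section
/- For all N ≥ 1, 2·Φ(4, N+1) − 2 ≥ Φ(4, N+2) − 1, i.e., (Φ(4,N+1)−1)/2 ≥ (Φ(4,N+2)−1)/4. -/
lemma nabla4_succ_le (n : ℕ) : nabla4 (n + 1) ≤ nabla4 n + 1 := by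
  unfold nabla4
  set k := Nat.findGreatest (fun k => Nat.choose (k + 1) 2 ≤ n + 1) (n + 1) with hk
  rcases Nat.eq_zero_or_pos k with h0 | hpos
  · omega
  · have hspec : Nat.choose (k + 1) 2 ≤ n + 1 := by
      have h0 : Nat.choose (0 + 1) 2 ≤ n + 1 := by simp
      exact Nat.findGreatest_spec (P := fun j => Nat.choose (j + 1) 2 ≤ n + 1)
        (Nat.zero_le (n + 1)) h0
    have hchoose : Nat.choose (k + 1) 2 = Nat.choose k 1 + Nat.choose k 2 := by
      rw [Nat.choose_succ_succ]
    have hk1 : Nat.choose k 1 = k := Nat.choose_one_right k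
    have hP : Nat.choose ((k - 1) + 1) 2 ≤ n := by
      have : (k - 1) + 1 = k := by omega
      rw [this]
      omega
    have hkb : k ≤ n + 1 := Nat.findGreatest_le _
    have : k - 1 ≤ Nat.findGreatest (fun k => Nat.choose (k + 1) 2 ≤ n) n :=
      Nat.le_findGreatest (by omega) hP
    omega

lemma phi4_ge (N : ℕ) (hN : 1 ≤ N) : 2 ^ nabla4 (N + 1) + 1 ≤ Phi4 (N + 1) := by
  induction N with
  | zero => omega
  | succ n ih =>
    rcases Nat.eq_zero_or_pos n with h0 | hpos
    · subst h0; decide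
    · have ih' := ih hpos
      have hstep : Phi4 (n + 2) = Phi4 (n + 1) + 2 ^ nabla4 (n + 1) := by
        unfold Phi4; rw [Finset.sum_range_succ]
      have hle := nabla4_succ_le (n + 1)
      have : 2 ^ nabla4 (n + 2) ≤ 2 ^ (nabla4 (n + 1) + 1) :=
        Nat.pow_le_pow_right (by norm_num) hle
      rw [pow_succ] at this
      show 2 ^ nabla4 (n + 2) + 1 ≤ Phi4 (n + 2)
      rw [hstep]
      omega

/-- For all `N ≥ 1`, `2·Φ(4, N+1) − 2 ≥ Φ(4, N+2) − 1`. -/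
theorem phi4_doubling (N : ℕ) (hN : 1 ≤ N) :
    2 * (Phi4 (N + 1) : ℤ) - 2 ≥ (Phi4 (N + 2) : ℤ) - 1 := by
  have hstep : Phi4 (N + 2) = Phi4 (N + 1) + 2 ^ nabla4 (N + 1) := by
    unfold Phi4; rw [Finset.sum_range_succ]
  have h : (2:ℤ) ^ nabla4 (N + 1) + 1 ≤ (Phi4 (N + 1) : ℤ) := by
    exact_mod_cast phi4_ge N hN
  rw [hstep]
  push_cast
  linarith
end

section
/- For all N ≥ 2, (Φ(4, N+1) − 1)/2 = min over a, b ≥ 1 with a + b = N of Φ(4, a) + 2^b − 1, where Φ(4, M) = Σ_{n=0}^{M−1} 2^{∇_4(n)} and ∇_4(n) = max{k ≥ 0 : k(k+1)/2 ≤ n}. -/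
namespace PhiAux

def T (k : ℕ) : ℕ := Nat.choose (k + 1) 2

lemma T_zero : T 0 = 0 := rfl

lemma T_succ (k : ℕ) : T (k + 1) = T k + (k + 1) := by
  show Nat.choose (k + 2) 2 = _
  rw [Nat.choose_succ_succ (k + 1) 1, Nat.choose_one_right]
  simp [T]; ring

lemma self_le_T (k : ℕ) : k ≤ T k := by
  induction k with
  | zero => simp [T_zero]
  | succ n ih => rw [T_succ]; omega

lemma T_mono : Monotone T := by
  apply monotone_nat_of_le_succ
  intro n; rw [T_succ]; omega

lemma T_le_of_nabla (n : ℕ) : T (nabla4 n) ≤ n :=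
  Nat.findGreatest_spec (P := fun k => Nat.choose (k + 1) 2 ≤ n)
    (Nat.zero_le n) (by simp)

lemma le_nabla4 {k n : ℕ} (h : T k ≤ n) : k ≤ nabla4 n :=
  Nat.le_findGreatest (le_trans (self_le_T k) h) h

lemma lt_T_nabla_succ (n : ℕ) : n < T (nabla4 n + 1) := by
  by_cases h : nabla4 n + 1 ≤ n
  · have := Nat.findGreatest_is_greatest (P := fun k => Nat.choose (k + 1) 2 ≤ n)
      (Nat.lt_succ_self _) h
    simpa [T, nabla4] using Nat.lt_of_not_le this
  · have h1 : n ≤ nabla4 n := by omega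
    have := self_le_T (nabla4 n + 1)
    omega

lemma nabla4_mono : Monotone nabla4 := fun m _ h =>
  le_nabla4 (le_trans (T_le_of_nabla m) h)

lemma nabla4_eq {k n : ℕ} (h1 : T k ≤ n) (h2 : n < T (k + 1)) : nabla4 n = k := by
  refine le_antisymm ?_ (le_nabla4 h1)
  by_contra h
  have hk : k + 1 ≤ nabla4 n := by omega
  have := le_trans (T_mono hk) (T_le_of_nabla n)
  omega

lemma Phi4_succ (N : ℕ) : Phi4 (N + 1) = Phi4 N + 2 ^ nabla4 N :=
  Finset.sum_range_succ _ _

lemma Phi4_T_add (k r : ℕ) (hr : r ≤ k + 1) :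
    Phi4 (T k + r) = Phi4 (T k) + r * 2 ^ k := by
  induction r with
  | zero => simp
  | succ r ih =>
    have hr' : r ≤ k + 1 := by omega
    have hn : nabla4 (T k + r) = k :=
      nabla4_eq (by omega) (by rw [T_succ]; omega)
    rw [show T k + (r + 1) = (T k + r) + 1 by ring, Phi4_succ, ih hr', hn]
    ring

lemma Phi4_T (k : ℕ) : Phi4 (T (k + 1)) = k * 2 ^ (k + 1) + 1 := by
  induction k with
  | zero =>
    have h1 : T 1 = 1 := rfl
    rw [h1]
    show Phi4 (0 + 1) = 1
    rw [Phi4_succ]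
    simp [Phi4, nabla4]
  | succ n ih =>
    rw [T_succ (n + 1), Phi4_T_add (n + 1) (n + 2) (by omega), ih]
    ring

end PhiAux

open PhiAux in
/-- For all `N ≥ 2`, `(Φ(4, N+1) − 1)/2` is the minimum of `Φ(4, a) + 2^b − 1`
over `a, b ≥ 1` with `a + b = N`. -/
theorem half_phi4_eq_min (N : ℕ) (hN : 2 ≤ N) :
    IsLeast {x : ℕ | ∃ a b : ℕ, 1 ≤ a ∧ 1 ≤ b ∧ a + b = N ∧
        x = Phi4 a + 2 ^ b - 1}
      ((Phi4 (N + 1) - 1) / 2) := by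
  have hT1 : T 1 = 1 := rfl
  have hk1 : 1 ≤ nabla4 N := le_nabla4 (by omega)
  obtain ⟨j, hj⟩ : ∃ j, nabla4 N = j + 1 := ⟨nabla4 N - 1, by omega⟩
  have hTk : T (j + 1) ≤ N := hj ▸ T_le_of_nabla N
  have hNlt : N < T (j + 1) + (j + 2) := by
    have := lt_T_nabla_succ N
    rw [hj, T_succ (j + 1)] at this
    omega
  obtain ⟨r, hNr, hrk⟩ : ∃ r, N = T (j + 1) + r ∧ r ≤ j + 1 := ⟨N - T (j + 1), by omega, by omega⟩
  have hTj : T (j + 1) = T j + (j + 1) := T_succ j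
  have hTjj : j ≤ T j := self_le_T j
  -- value of Phi4 (N+1)
  have hPhi : Phi4 (N + 1) = 2 * ((j + r + 1) * 2 ^ j) + 1 := by
    rw [show N + 1 = T (j + 1) + (r + 1) by omega, Phi4_T_add _ _ (by omega), Phi4_T]
    ring
  have hdiv : (Phi4 (N + 1) - 1) / 2 = (j + r + 1) * 2 ^ j := by omega
  -- the minimizer astar = N - (j+1) = T j + r
  have hastar1 : 1 ≤ N - (j + 1) := by omega
  have hastarT : N - (j + 1) = T j + r := by omega
  have hgstar : Phi4 (N - (j + 1)) + 2 ^ (j + 1) = (j + r + 1) * 2 ^ j + 1 := by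
    rcases Nat.eq_zero_or_pos j with rfl | hj0
    · have hT0 : T 0 = 0 := rfl
      have hr1 : r = 1 := by omega
      rw [hastarT, hT0, hr1]
      have h1 : Phi4 (0 + 1) = 1 := by rw [Phi4_succ]; simp [Phi4, nabla4]
      simp only [Nat.zero_add] at h1 ⊢
      rw [h1]; norm_num
    · obtain ⟨i, rfl⟩ : ∃ i, j = i + 1 := ⟨j - 1, by omega⟩
      rw [hastarT, Phi4_T_add (i + 1) r (by omega), Phi4_T]
      ring
  -- downward: for a ≤ astar, value at astar is ≤ value at a
  have down : ∀ d a, a + d = N - (j + 1) →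
      Phi4 (N - (j + 1)) + 2 ^ (N - (N - (j + 1))) ≤ Phi4 a + 2 ^ (N - a) := by
    intro d
    induction d with
    | zero => intro a h; rw [show a = N - (j + 1) by omega]
    | succ d ih =>
      intro a h
      refine (ih (a + 1) (by omega)).trans ?_
      have hna : nabla4 a ≤ nabla4 N := nabla4_mono (by omega)
      have hpow : 2 ^ nabla4 a ≤ 2 ^ (N - (a + 1)) :=
        Nat.pow_le_pow_right (by norm_num) (by omega)
      have hsplit : 2 ^ (N - a) = 2 ^ (N - (a + 1)) + 2 ^ (N - (a + 1)) := by
        rw [show N - a = (N - (a + 1)) + 1 by omega, pow_succ]; ring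
      rw [Phi4_succ]
      omega
  -- upward: for astar ≤ c ≤ N, value at astar is ≤ value at c
  have up : ∀ d, N - (j + 1) + d ≤ N →
      Phi4 (N - (j + 1)) + 2 ^ (N - (N - (j + 1))) ≤
        Phi4 (N - (j + 1) + d) + 2 ^ (N - (N - (j + 1) + d)) := by
    intro d
    induction d with
    | zero => intro _; rfl
    | succ d ih =>
      intro h
      refine (ih (by omega)).trans ?_
      have hnc : j ≤ nabla4 (N - (j + 1) + d) := le_nabla4 (by omega)
      have hpow : 2 ^ (N - (N - (j + 1) + d + 1)) ≤ 2 ^ nabla4 (N - (j + 1) + d) :=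
        Nat.pow_le_pow_right (by norm_num) (by omega)
      have hsplit : 2 ^ (N - (N - (j + 1) + d)) =
          2 ^ (N - (N - (j + 1) + d + 1)) + 2 ^ (N - (N - (j + 1) + d + 1)) := by
        rw [show N - (N - (j + 1) + d) = (N - (N - (j + 1) + d + 1)) + 1 by omega, pow_succ]
        ring
      rw [show N - (j + 1) + (d + 1) = (N - (j + 1) + d) + 1 by ring, Phi4_succ]
      omega
  have hNNj : N - (N - (j + 1)) = j + 1 := by omega
  constructor
  · refine ⟨N - (j + 1), j + 1, hastar1, by omega, by omega, ?_⟩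
    rw [hdiv]
    omega
  · rintro x ⟨a, b, ha, hb, hab, hx⟩
    obtain rfl : b = N - a := by omega
    rw [hdiv, hx]
    have hkey : Phi4 (N - (j + 1)) + 2 ^ (N - (N - (j + 1))) ≤ Phi4 a + 2 ^ (N - a) := by
      rcases le_or_gt a (N - (j + 1)) with hle | hlt
      · exact down (N - (j + 1) - a) a (by omega)
      · have := up (a - (N - (j + 1))) (by omega)
        rwa [show N - (j + 1) + (a - (N - (j + 1))) = a by omega] at this
    rw [hNNj] at hkey
    have h1 : 1 ≤ 2 ^ (N - a) := Nat.one_le_two_pow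
    omega
end

section
/- For all p ≥ 4 and N ≥ 2, and every 1 ≤ ℓ ≤ N−1, Γ(p, N) ≥ 2·min{Γ(p, N−ℓ), Γ(p−1, ℓ)}, where Γ(p, N) is the minimum length of a path in the Hanoi graph H(p, N) that moves every disk at least once (minimized over all starting configurations). -/
/-- A configuration of `N` disks (labelled `0, …, N-1` by increasing size) on
`p` pegs: disk `i` sits on peg `u i`. Disks on a common peg are stacked in
increasing size, so a configuration is just the assignment of disks to pegs. -/
def Conf (p N : ℕ) : Type := Fin N → Fin p

/-- `IsMove u v` holds iff `v` is obtained from `u` by one legal move: some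
disk `d` changes pegs, every other disk stays put, and no smaller disk lies on
the source peg or the target peg of `d` (so `d` is topmost and is placed on a
larger disk or an empty peg). -/
def IsMove {p N : ℕ} (u v : Conf p N) : Prop :=
  ∃ d : Fin N, u d ≠ v d ∧ (∀ e, e ≠ d → u e = v e) ∧
    ∀ e : Fin N, (e : ℕ) < (d : ℕ) → u e ≠ u d ∧ u e ≠ v d

/-- A path of length `len` in the Hanoi graph `H(p, N)`. -/
structure HanoiPath (p N : ℕ) where
  len : ℕ
  conf : ℕ → Conf p N
  step : ∀ t, t < len → IsMove (conf t) (conf (t + 1))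

/-- A path is essential if every disk moves at least once along it. -/
def Essential {p N : ℕ} (γ : HanoiPath p N) : Prop :=
  ∀ d : Fin N, ∃ t, t < γ.len ∧ γ.conf t d ≠ γ.conf (t + 1) d

/-- `Γ(p, N)`: the minimum length of an essential path in `H(p, N)`, over all
starting (and ending) configurations. -/
noncomputable def HanoiGamma (p N : ℕ) : ℕ :=
  sInf {L | ∃ γ : HanoiPath p N, γ.len = L ∧ Essential γ}

/-- Graph distance in `H(p, N)`: the minimum length of a path from `u` to `v`. -/
noncomputable def hanoiDist {p N : ℕ} (u v : Conf p N) : ℕ :=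
  sInf {L | ∃ γ : HanoiPath p N, γ.len = L ∧ γ.conf 0 = u ∧ γ.conf L = v}

section Basic
variable {p N : ℕ}

/-- `d` makes a move at some step in `[a, b)`. -/
def MovesIn (γ : HanoiPath p N) (d : Fin N) (a b : ℕ) : Prop :=
  ∃ t, a ≤ t ∧ t < b ∧ γ.conf t d ≠ γ.conf (t + 1) d

lemma mover_eq (γ : HanoiPath p N) {t : ℕ} (ht : t < γ.len) {d e : Fin N}
    (hd : γ.conf t d ≠ γ.conf (t + 1) d) (he : γ.conf t e ≠ γ.conf (t + 1) e) : d = e := by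
  obtain ⟨D, _, h2, _⟩ := γ.step t ht
  have hdD : d = D := by by_contra h; exact hd (h2 d h)
  have heD : e = D := by by_contra h; exact he (h2 e h)
  rw [hdD, heD]

lemma const_of_no_move (γ : HanoiPath p N) (d : Fin N) {t₁ t₂ : ℕ} (h12 : t₁ ≤ t₂)
    (h : ∀ u, t₁ ≤ u → u < t₂ → γ.conf u d = γ.conf (u + 1) d) :
    γ.conf t₁ d = γ.conf t₂ d := by
  induction t₂, h12 using Nat.le_induction with
  | base => rfl
  | succ n hn ih =>
    rw [ih (fun u hu hu' => h u hu (by omega)), h n hn (by omega)]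

lemma stat_const (γ : HanoiPath p N) {s : Fin N} {a b : ℕ} (hs : ¬ MovesIn γ s a b)
    {t : ℕ} (hat : a ≤ t) (htb : t ≤ b) : γ.conf t s = γ.conf a s := by
  refine (const_of_no_move γ s hat (fun u hu hu' => ?_)).symm
  by_contra h
  exact hs ⟨u, hu, by omega, h⟩

/-- Confinement: if `s` sits on peg `c` throughout `[a,b]` and `d > s` moves during
`[a,b)`, then `d` is never on peg `c` during `[a,b]`. -/
lemma confine (γ : HanoiPath p N) {a b : ℕ} (hb : b ≤ γ.len) {s d : Fin N} {c : Fin p}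
    (hsd : (s : ℕ) < (d : ℕ))
    (hs : ∀ t, a ≤ t → t ≤ b → γ.conf t s = c)
    (hd : MovesIn γ d a b) :
    ∀ t, a ≤ t → t ≤ b → γ.conf t d ≠ c := by
  classical
  intro τ haτ hτb hcontra
  obtain ⟨t₀, ht₀a, ht₀b, ht₀mv⟩ := hd
  rcases le_or_gt τ t₀ with hcase | hcase
  · -- find least move time ≥ τ
    have hex : ∃ t, τ ≤ t ∧ γ.conf t d ≠ γ.conf (t + 1) d := ⟨t₀, hcase, ht₀mv⟩
    set g := Nat.find hex with hg
    obtain ⟨hg1, hg2⟩ := Nat.find_spec hex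
    have hgle : g ≤ t₀ := Nat.find_min' hex ⟨hcase, ht₀mv⟩
    have hgb : g < b := lt_of_le_of_lt hgle ht₀b
    have hconst : γ.conf τ d = γ.conf g d := by
      refine const_of_no_move γ d hg1 (fun u hu hu' => ?_)
      by_contra h
      exact (Nat.find_min hex hu') ⟨hu, h⟩
    obtain ⟨D, hD1, hD2, hD3⟩ := γ.step g (lt_of_lt_of_le hgb hb)
    have hdD : d = D := by by_contra h; exact hg2 (hD2 d h)
    have := (hD3 s (by rw [← hdD]; exact hsd)).1
    rw [hs g (le_trans haτ hg1) (le_of_lt hgb), ← hdD, ← hconst, hcontra] at this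
    exact this rfl
  · -- find greatest move time < τ
    set Q : ℕ → Prop := fun t => a ≤ t ∧ γ.conf t d ≠ γ.conf (t + 1) d with hQ
    set g := Nat.findGreatest Q (τ - 1) with hg
    have hQt₀ : Q t₀ := ⟨ht₀a, ht₀mv⟩
    have hspec : Q g := Nat.findGreatest_spec (m := t₀) (by omega) hQt₀
    have hgle : g ≤ τ - 1 := Nat.findGreatest_le _
    have hgτ : g + 1 ≤ τ := by omega
    have hconst : γ.conf (g + 1) d = γ.conf τ d := by
      refine const_of_no_move γ d hgτ (fun u hu hu' => ?_)
      by_contra h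
      exact Nat.findGreatest_is_greatest (P := Q) (n := τ - 1) (k := u) (by omega) (by omega) ⟨by omega, h⟩
    have hgb : g < b := by omega
    obtain ⟨D, hD1, hD2, hD3⟩ := γ.step g (lt_of_lt_of_le hgb hb)
    have hdD : d = D := by by_contra h; exact hspec.2 (hD2 d h)
    have := (hD3 s (by rw [← hdD]; exact hsd)).2
    rw [hs g hspec.1 (le_of_lt hgb), ← hdD, hconst, hcontra] at this
    exact this rfl

end Basic

lemma project_bound {p N : ℕ} (γ : HanoiPath p N) (a b : ℕ) (hab : a ≤ b) (hb : b ≤ γ.len)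
    {k q : ℕ} (ι : Fin k → Fin N) (hι : StrictMono ι)
    (ρ : Fin p → Fin q) (P : Set (Fin p)) (hρ : Set.InjOn ρ P)
    (hconf : ∀ (i : Fin k) (t : ℕ), a ≤ t → t ≤ b → γ.conf t (ι i) ∈ P)
    (hmv : ∀ i : Fin k, MovesIn γ (ι i) a b) :
    HanoiGamma q k ≤ b - a := by
  classical
  set T : Finset ℕ := (Finset.Ico a b).filter
    (fun t => ∃ i : Fin k, γ.conf t (ι i) ≠ γ.conf (t + 1) (ι i)) with hT
  set n := T.card with hn
  set e : Fin n ≃o {x // x ∈ T} := T.orderIsoOfFin rfl with he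
  set τ : ℕ → ℕ := fun j => if h : j < n then (e ⟨j, h⟩ : ℕ) else b with hτ
  have hTmem : ∀ {t}, t ∈ T →
      a ≤ t ∧ t < b ∧ ∃ i : Fin k, γ.conf t (ι i) ≠ γ.conf (t + 1) (ι i) := by
    intro t ht
    simp only [hT, Finset.mem_filter, Finset.mem_Ico] at ht
    exact ⟨ht.1.1, ht.1.2, ht.2⟩
  have hτT : ∀ j (h : j < n), τ j ∈ T := by
    intro j h; simp only [hτ, dif_pos h]; exact (e ⟨j, h⟩).2
  have hτab : ∀ j, a ≤ τ j ∧ τ j ≤ b := by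
    intro j
    by_cases h : j < n
    · obtain ⟨h1, h2, _⟩ := hTmem (hτT j h); exact ⟨h1, le_of_lt h2⟩
    · simp only [hτ, dif_neg h]; exact ⟨hab, le_rfl⟩
  have hsurj : ∀ t, t ∈ T → ∃ j : Fin n, (e j : ℕ) = t := by
    intro t ht
    exact ⟨e.symm ⟨t, ht⟩, by rw [OrderIso.apply_symm_apply]⟩
  have hτlt : ∀ j, j < n → τ j < τ (j + 1) := by
    intro j hj
    by_cases h : j + 1 < n
    · simp only [hτ, dif_pos hj, dif_pos h]
      have : (⟨j, hj⟩ : Fin n) < ⟨j + 1, h⟩ := by simp [Fin.lt_def]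
      exact_mod_cast (OrderIso.lt_iff_lt e).mpr this
    · simp only [hτ, dif_pos hj, dif_neg h]
      have := (hTmem (hτT j hj)).2.1
      simpa only [hτ, dif_pos hj] using this
  have hgap : ∀ j, j < n → ∀ u, τ j < u → u < τ (j + 1) → u ∉ T := by
    intro j hj u h1 h2 hu
    obtain ⟨j', hj'⟩ := hsurj u hu
    have hjj' : j < (j' : ℕ) := by
      have : (⟨j, hj⟩ : Fin n) < j' := by
        apply (OrderIso.lt_iff_lt e).mp
        rw [← Subtype.coe_lt_coe]
        simp only [hτ, dif_pos hj] at h1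
        rw [hj']; exact h1
      exact this
    by_cases h : j + 1 < n
    · have : (j' : ℕ) < j + 1 := by
        have : j' < (⟨j + 1, h⟩ : Fin n) := by
          apply (OrderIso.lt_iff_lt e).mp
          rw [← Subtype.coe_lt_coe]
          simp only [hτ, dif_pos h] at h2
          rw [hj']; exact h2
        exact this
      omega
    · have := j'.2; omega
  have hbridge : ∀ j, j < n → ∀ i : Fin k,
      γ.conf (τ j + 1) (ι i) = γ.conf (τ (j + 1)) (ι i) := by
    intro j hj i
    refine const_of_no_move γ (ι i) (hτlt j hj) (fun u hu hu' => ?_)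
    by_contra hne
    have huT : u ∈ T := by
      simp only [hT, Finset.mem_filter, Finset.mem_Ico]
      refine ⟨⟨?_, ?_⟩, ⟨i, hne⟩⟩
      · exact le_trans (hτab j).1 (by omega)
      · exact lt_of_lt_of_le hu' (hτab (j + 1)).2
    exact hgap j hj u (by omega) hu' huT
  have hstep : ∀ j, j < n → IsMove (p := q) (N := k)
      (fun i => ρ (γ.conf (τ j) (ι i))) (fun i => ρ (γ.conf (τ (j + 1)) (ι i))) := by
    intro j hj
    obtain ⟨ha1, hb1, i₀, hi₀⟩ := hTmem (hτT j hj)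
    obtain ⟨D, hD1, hD2, hD3⟩ := γ.step (τ j) (lt_of_lt_of_le hb1 hb)
    have hiD : ι i₀ = D := by
      by_contra h; exact hi₀ (hD2 _ h)
    have hmem : ∀ (i : Fin k) (t : ℕ), a ≤ t → t ≤ b → γ.conf t (ι i) ∈ P := hconf
    refine ⟨i₀, ?_, ?_, ?_⟩
    · show ρ (γ.conf (τ j) (ι i₀)) ≠ ρ (γ.conf (τ (j + 1)) (ι i₀))
      rw [← hbridge j hj i₀]
      intro hcontra
      exact hi₀ (hρ (hmem i₀ (τ j) ha1 (le_of_lt hb1))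
        (hmem i₀ (τ j + 1) (by omega) (by omega)) hcontra)
    · intro i hii
      have hne : ι i ≠ D := fun h => hii (hι.injective (h.trans hiD.symm))
      show ρ (γ.conf (τ j) (ι i)) = ρ (γ.conf (τ (j + 1)) (ι i))
      rw [← hbridge j hj i, ← hD2 _ hne]
    · intro i hlt
      have hιlt : ((ι i : Fin N) : ℕ) < (D : ℕ) := by
        rw [← hiD]
        exact hι (show i < i₀ from Fin.lt_def.mpr hlt)
      obtain ⟨h3a, h3b⟩ := hD3 (ι i) hιlt
      have m1 := hmem i (τ j) ha1 (le_of_lt hb1)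
      have m2 := hmem i₀ (τ j) ha1 (le_of_lt hb1)
      have m3 := hmem i₀ (τ j + 1) (by omega) (by omega)
      constructor
      · show ρ (γ.conf (τ j) (ι i)) ≠ ρ (γ.conf (τ j) (ι i₀))
        intro hcontra
        apply h3a
        rw [hiD] at m2 hcontra
        exact hρ m1 m2 hcontra
      · show ρ (γ.conf (τ j) (ι i)) ≠ ρ (γ.conf (τ (j + 1)) (ι i₀))
        rw [← hbridge j hj i₀]
        intro hcontra
        apply h3b
        rw [hiD] at m3 hcontra
        exact hρ m1 m3 hcontra
  have hess : Essential (p := q) (N := k)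
      ⟨n, fun j i => ρ (γ.conf (τ j) (ι i)), hstep⟩ := by
    intro i
    obtain ⟨t, ht1, ht2, ht3⟩ := hmv i
    have htT : t ∈ T := by
      simp only [hT, Finset.mem_filter, Finset.mem_Ico]
      exact ⟨⟨ht1, ht2⟩, ⟨i, ht3⟩⟩
    obtain ⟨j, hj⟩ := hsurj t htT
    have hjn : (j : ℕ) < n := j.2
    have hτj : τ (j : ℕ) = t := by
      simp only [hτ, dif_pos hjn]
      rw [← hj]
    refine ⟨j, hjn, ?_⟩
    show ρ (γ.conf (τ (j : ℕ)) (ι i)) ≠ ρ (γ.conf (τ ((j : ℕ) + 1)) (ι i))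
    rw [← hbridge j hjn i, hτj]
    intro hcontra
    exact ht3 (hρ (hconf i t ht1 (le_of_lt ht2))
      (hconf i (t + 1) (by omega) (by omega)) hcontra)
  have h1 : HanoiGamma q k ≤ n :=
    Nat.sInf_le ⟨⟨n, fun j i => ρ (γ.conf (τ j) (ι i)), hstep⟩, rfl, hess⟩
  have h2 : n ≤ b - a := by
    rw [hn]
    calc T.card ≤ (Finset.Ico a b).card := Finset.card_le_card (Finset.filter_subset _ _)
    _ = b - a := Nat.card_Ico a b
  omega

section Certs
variable {p N : ℕ}

open scoped Classical in
/-- The set of disks that move during `[a, b)`. -/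
noncomputable def Movers (γ : HanoiPath p N) (a b : ℕ) : Finset (Fin N) :=
  Finset.univ.filter (fun d => MovesIn γ d a b)

lemma mem_movers {γ : HanoiPath p N} {a b : ℕ} {d : Fin N} :
    d ∈ Movers γ a b ↔ MovesIn γ d a b := by
  simp [Movers]

/-- A one-point-deleted copy of the pegs. -/
def punch {q : ℕ} (hq : 1 ≤ q) (c : Fin (q + 1)) (x : Fin (q + 1)) : Fin q :=
  if h : (x : ℕ) < (c : ℕ) then ⟨x, by have := c.isLt; omega⟩
  else ⟨(x : ℕ) - 1, by have := x.isLt; omega⟩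

lemma punch_injOn {q : ℕ} (hq : 1 ≤ q) (c : Fin (q + 1)) :
    Set.InjOn (punch hq c) {x | x ≠ c} := by
  intro x hx y hy hxy
  have hx' : (x : ℕ) ≠ (c : ℕ) := fun h => hx (Fin.ext h)
  have hy' : (y : ℕ) ≠ (c : ℕ) := fun h => hy (Fin.ext h)
  apply Fin.ext
  have hval := congrArg Fin.val hxy
  unfold punch at hval
  by_cases h1 : (x : ℕ) < (c : ℕ) <;> by_cases h2 : (y : ℕ) < (c : ℕ) <;>
    [rw [dif_pos h1, dif_pos h2] at hval; rw [dif_pos h1, dif_neg h2] at hval;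
     rw [dif_neg h1, dif_pos h2] at hval; rw [dif_neg h1, dif_neg h2] at hval] <;>
    simp only [] at hval <;> omega

lemma cert1_bound (γ : HanoiPath p N) {a b : ℕ} (hab : a ≤ b) (hb : b ≤ γ.len)
    {n : ℕ} (hcard : n ≤ (Movers γ a b).card) :
    HanoiGamma p n ≤ b - a := by
  classical
  obtain ⟨K, hKsub, hKcard⟩ := Finset.exists_subset_card_eq hcard
  refine project_bound γ a b hab hb (K.orderEmbOfFin hKcard)
    (K.orderEmbOfFin hKcard).strictMono id Set.univ (Set.injOn_id _) (fun _ _ _ _ => trivial)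
    (fun i => ?_)
  have := hKsub (Finset.orderEmbOfFin_mem K hKcard i)
  exact mem_movers.mp this

lemma cert2_bound (γ : HanoiPath p N) {a b : ℕ} (hab : a ≤ b) (hb : b ≤ γ.len)
    (hp : 4 ≤ p) {n : ℕ} {s : Fin N} (hs : ¬ MovesIn γ s a b)
    (hcard : n ≤ ((Movers γ a b) ∩ Finset.Ioi s).card) :
    HanoiGamma (p - 1) n ≤ b - a := by
  classical
  obtain ⟨q, rfl⟩ : ∃ q, p = q + 1 := ⟨p - 1, by omega⟩
  have hq : 1 ≤ q := by omega
  obtain ⟨K, hKsub, hKcard⟩ := Finset.exists_subset_card_eq hcard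
  set c := γ.conf a s with hc
  have hstat : ∀ t, a ≤ t → t ≤ b → γ.conf t s = c := fun t h1 h2 => stat_const γ hs h1 h2
  have hK : ∀ d ∈ K, (s : ℕ) < (d : ℕ) ∧ MovesIn γ d a b := by
    intro d hd
    have := hKsub hd
    rw [Finset.mem_inter, Finset.mem_Ioi] at this
    exact ⟨this.2, mem_movers.mp this.1⟩
  have hq1 : q + 1 - 1 = q := by omega
  rw [hq1]
  refine project_bound γ a b hab hb (K.orderEmbOfFin hKcard)
    (K.orderEmbOfFin hKcard).strictMono (punch hq c) {x | x ≠ c} (punch_injOn hq c)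
    (fun i t h1 h2 => ?_) (fun i => (hK _ (Finset.orderEmbOfFin_mem K hKcard i)).2)
  obtain ⟨hlt, hmv⟩ := hK _ (Finset.orderEmbOfFin_mem K hKcard i)
  exact confine γ hb hlt hstat hmv t h1 h2

end Certs

section Comb
variable {p N : ℕ}

/-- A segment is good if either `N - l` disks move in it, or some disk `s` is
stationary while `l` disks larger than `s` move. -/
def Good (γ : HanoiPath p N) (l a b : ℕ) : Prop :=
  (N - l ≤ (Movers γ a b).card) ∨
  (∃ s : Fin N, ¬ MovesIn γ s a b ∧ l ≤ ((Movers γ a b) ∩ Finset.Ioi s).card)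

lemma good_len (γ : HanoiPath p N) (hp : 4 ≤ p) {l a b : ℕ} (hab : a ≤ b)
    (hb : b ≤ γ.len) (hg : Good γ l a b) :
    min (HanoiGamma p (N - l)) (HanoiGamma (p - 1) l) ≤ b - a := by
  rcases hg with h | ⟨s, hs, h⟩
  · exact le_trans (min_le_left _ _) (cert1_bound γ hab hb h)
  · exact le_trans (min_le_right _ _) (cert2_bound γ hab hb hp hs h)

lemma no_double_bad (γ : HanoiPath p N) (hess : Essential γ) {l : ℕ} (hl : 1 ≤ l)
    (hlN : l + 1 ≤ N) (w : ℕ) (hw : w ≤ γ.len)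
    (h1 : ¬ Good γ l 0 w) (h2 : ¬ Good γ l w γ.len) : False := by
  classical
  simp only [Good, not_or, not_le, not_exists, not_and] at h1 h2
  set M₁ := Movers γ 0 w with hM₁
  set M₂ := Movers γ w γ.len with hM₂
  set T₁ := Finset.univ \ M₁ with hT₁
  set T₂ := Finset.univ \ M₂ with hT₂
  have hTc₁ : T₁.card = N - M₁.card := by
    rw [hT₁, Finset.card_sdiff_of_subset (Finset.subset_univ M₁), Finset.card_univ, Fintype.card_fin]
  have hTc₂ : T₂.card = N - M₂.card := by
    rw [hT₂, Finset.card_sdiff_of_subset (Finset.subset_univ M₂), Finset.card_univ, Fintype.card_fin]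
  have hcard₁ : l + 1 ≤ T₁.card := by have h1' := h1.1; omega
  have hcard₂ : l + 1 ≤ T₂.card := by have h2' := h2.1; omega
  have hne₁ : T₁.Nonempty := Finset.card_pos.mp (by omega)
  have hne₂ : T₂.Nonempty := Finset.card_pos.mp (by omega)
  set s₁ := T₁.min' hne₁ with hs₁
  set s₂ := T₂.min' hne₂ with hs₂
  have hs₁T : s₁ ∈ T₁ := T₁.min'_mem hne₁
  have hs₂T : s₂ ∈ T₂ := T₂.min'_mem hne₂
  have hstat₁ : ¬ MovesIn γ s₁ 0 w := fun h =>
    (Finset.mem_sdiff.mp hs₁T).2 (mem_movers.mpr h)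
  have hstat₂ : ¬ MovesIn γ s₂ w γ.len := fun h =>
    (Finset.mem_sdiff.mp hs₂T).2 (mem_movers.mpr h)
  have hunion : ∀ d : Fin N, d ∈ M₁ ∨ d ∈ M₂ := by
    intro d
    obtain ⟨t, ht, hmv⟩ := hess d
    by_cases h : t < w
    · exact Or.inl (mem_movers.mpr ⟨t, Nat.zero_le _, h, hmv⟩)
    · exact Or.inr (mem_movers.mpr ⟨t, by omega, ht, hmv⟩)
  rcases lt_trichotomy s₁ s₂ with h | h | h
  · have hsub : T₂ ⊆ M₁ ∩ Finset.Ioi s₁ := by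
      intro d hd
      have hdM₁ : d ∈ M₁ := (hunion d).resolve_right (Finset.mem_sdiff.mp hd).2
      exact Finset.mem_inter.mpr ⟨hdM₁, Finset.mem_Ioi.mpr
        (lt_of_lt_of_le h (T₂.min'_le d hd))⟩
    have hle := Finset.card_le_card hsub
    have hlt := h1.2 s₁ hstat₁
    omega
  · have hA : s₁ ∉ M₁ := (Finset.mem_sdiff.mp hs₁T).2
    have hB : s₁ ∉ M₂ := by rw [h]; exact (Finset.mem_sdiff.mp hs₂T).2
    rcases hunion s₁ with hc | hc
    · exact hA hc
    · exact hB hc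
  · have hsub : T₁ ⊆ M₂ ∩ Finset.Ioi s₂ := by
      intro d hd
      have hdM₂ : d ∈ M₂ := (hunion d).resolve_left (Finset.mem_sdiff.mp hd).2
      exact Finset.mem_inter.mpr ⟨hdM₂, Finset.mem_Ioi.mpr
        (lt_of_lt_of_le h (T₁.min'_le d hd))⟩
    have hle := Finset.card_le_card hsub
    have hlt := h2.2 s₂ hstat₂
    omega

end Comb

section Comb2
variable {p N : ℕ}

lemma no_double_bad' (γ : HanoiPath p N) (hess : Essential γ) {l : ℕ} (hl : 1 ≤ l)
    (hlN : l + 1 ≤ N) (w : ℕ) (hwL : w < γ.len)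
    (h1 : ¬ Good γ l 0 w) (h2 : ¬ Good γ l (w + 1) γ.len)
    (g1 : Good γ l 0 (w + 1)) (g2 : Good γ l w γ.len) : False := by
  classical
  obtain ⟨D, hD1, hD2, hD3⟩ := γ.step w hwL
  simp only [Good, not_or, not_le, not_exists, not_and] at h1 h2
  set M₁ := Movers γ 0 w with hM₁
  set M₂ := Movers γ (w + 1) γ.len with hM₂
  set T₁ := Finset.univ \ M₁ with hT₁
  set T₂ := Finset.univ \ M₂ with hT₂
  have hTc₁ : T₁.card = N - M₁.card := by
    rw [hT₁, Finset.card_sdiff_of_subset (Finset.subset_univ M₁), Finset.card_univ, Fintype.card_fin]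
  have hTc₂ : T₂.card = N - M₂.card := by
    rw [hT₂, Finset.card_sdiff_of_subset (Finset.subset_univ M₂), Finset.card_univ, Fintype.card_fin]
  have hcard₁ : l + 1 ≤ T₁.card := by have h1' := h1.1; omega
  have hcard₂ : l + 1 ≤ T₂.card := by have h2' := h2.1; omega
  have hne₁ : T₁.Nonempty := Finset.card_pos.mp (by omega)
  have hne₂ : T₂.Nonempty := Finset.card_pos.mp (by omega)
  set s₁ := T₁.min' hne₁ with hs₁
  set s₂ := T₂.min' hne₂ with hs₂
  have hs₁T : s₁ ∈ T₁ := T₁.min'_mem hne₁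
  have hs₂T : s₂ ∈ T₂ := T₂.min'_mem hne₂
  have hs₁M : s₁ ∉ M₁ := (Finset.mem_sdiff.mp hs₁T).2
  have hs₂M : s₂ ∉ M₂ := (Finset.mem_sdiff.mp hs₂T).2
  have hstat₁ : ¬ MovesIn γ s₁ 0 w := fun h => hs₁M (mem_movers.mpr h)
  have hstat₂ : ¬ MovesIn γ s₂ (w + 1) γ.len := fun h => hs₂M (mem_movers.mpr h)
  have hstep_only : ∀ d : Fin N, γ.conf w d ≠ γ.conf (w + 1) d → d = D := by
    intro d hd
    by_contra h
    exact hd (hD2 d h)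
  have hunion : ∀ d : Fin N, d ∈ M₁ ∨ d ∈ M₂ ∨ d = D := by
    intro d
    obtain ⟨t, ht, hmv⟩ := hess d
    rcases lt_trichotomy t w with h | h | h
    · exact Or.inl (mem_movers.mpr ⟨t, Nat.zero_le _, h, hmv⟩)
    · subst h
      exact Or.inr (Or.inr (hstep_only d hmv))
    · exact Or.inr (Or.inl (mem_movers.mpr ⟨t, by omega, ht, hmv⟩))
  rcases lt_trichotomy s₁ s₂ with h | h | h
  · -- s₁ < s₂ : many stationary-in-2 disks move in half 1, above s₁
    have hsub : T₂ \ {D} ⊆ M₁ ∩ Finset.Ioi s₁ := by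
      intro d hd
      rw [Finset.mem_sdiff, Finset.mem_singleton] at hd
      have hdM₂ : d ∉ M₂ := (Finset.mem_sdiff.mp hd.1).2
      have hdM₁ : d ∈ M₁ := by
        rcases hunion d with hc | hc | hc
        · exact hc
        · exact absurd hc hdM₂
        · exact absurd hc hd.2
      exact Finset.mem_inter.mpr ⟨hdM₁, Finset.mem_Ioi.mpr
        (lt_of_lt_of_le h (T₂.min'_le d hd.1))⟩
    have hle := Finset.card_le_card hsub
    have hle2 : T₂.card ≤ (T₂ \ {D}).card + 1 := by
      have := Finset.card_le_card_sdiff_add_card (s := T₂) (t := {D})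
      simpa using this
    have hlt := h1.2 s₁ hstat₁
    omega
  · -- s₁ = s₂ : the tight case
    have hsD : s₁ = D := by
      rcases hunion s₁ with hc | hc | hc
      · exact absurd hc hs₁M
      · rw [h] at hc; exact absurd hc hs₂M
      · exact hc
    have hk₁ : (M₁ ∩ Finset.Ioi s₁).card < l := h1.2 s₁ hstat₁
    have hk₂ : (M₂ ∩ Finset.Ioi s₁).card < l := by
      have := h2.2 s₂ hstat₂
      rw [← h] at this
      exact this
    have hIio₁ : ∀ d : Fin N, d < s₁ → d ∈ M₁ := by
      intro d hd
      by_contra hc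
      have : d ∈ T₁ := Finset.mem_sdiff.mpr ⟨Finset.mem_univ d, hc⟩
      exact absurd (T₁.min'_le d this) (not_le.mpr hd)
    have hIio₂ : ∀ d : Fin N, d < s₁ → d ∈ M₂ := by
      intro d hd
      by_contra hc
      have : d ∈ T₂ := Finset.mem_sdiff.mpr ⟨Finset.mem_univ d, hc⟩
      have h2'' : s₂ ≤ d := T₂.min'_le d this
      rw [← h] at h2''
      exact absurd h2'' (not_le.mpr hd)
    have hdecomp₁ : M₁ = Finset.Iio s₁ ∪ (M₁ ∩ Finset.Ioi s₁) := by
      ext d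
      constructor
      · intro hd
        rcases lt_trichotomy d s₁ with hc | hc | hc
        · exact Finset.mem_union_left _ (Finset.mem_Iio.mpr hc)
        · rw [hc] at hd; exact absurd hd hs₁M
        · exact Finset.mem_union_right _ (Finset.mem_inter.mpr ⟨hd, Finset.mem_Ioi.mpr hc⟩)
      · intro hd
        rcases Finset.mem_union.mp hd with hc | hc
        · exact hIio₁ d (Finset.mem_Iio.mp hc)
        · exact (Finset.mem_inter.mp hc).1
    have hdecomp₂ : M₂ = Finset.Iio s₁ ∪ (M₂ ∩ Finset.Ioi s₁) := by
      ext d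
      constructor
      · intro hd
        rcases lt_trichotomy d s₁ with hc | hc | hc
        · exact Finset.mem_union_left _ (Finset.mem_Iio.mpr hc)
        · rw [hc, h] at hd; exact absurd hd hs₂M
        · exact Finset.mem_union_right _ (Finset.mem_inter.mpr ⟨hd, Finset.mem_Ioi.mpr hc⟩)
      · intro hd
        rcases Finset.mem_union.mp hd with hc | hc
        · exact hIio₂ d (Finset.mem_Iio.mp hc)
        · exact (Finset.mem_inter.mp hc).1
    have hdisj₁ : Disjoint (Finset.Iio s₁) (M₁ ∩ Finset.Ioi s₁) := by
      rw [Finset.disjoint_left]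
      intro d hd hd'
      have := Finset.mem_Ioi.mp (Finset.mem_inter.mp hd').2
      exact absurd this (not_lt.mpr (le_of_lt (Finset.mem_Iio.mp hd)))
    have hdisj₂ : Disjoint (Finset.Iio s₁) (M₂ ∩ Finset.Ioi s₁) := by
      rw [Finset.disjoint_left]
      intro d hd hd'
      have := Finset.mem_Ioi.mp (Finset.mem_inter.mp hd').2
      exact absurd this (not_lt.mpr (le_of_lt (Finset.mem_Iio.mp hd)))
    have hcardM₁ : M₁.card = (s₁ : ℕ) + (M₁ ∩ Finset.Ioi s₁).card := by
      conv_lhs => rw [hdecomp₁]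
      rw [Finset.card_union_of_disjoint hdisj₁, Fin.card_Iio]
    have hcardM₂ : M₂.card = (s₁ : ℕ) + (M₂ ∩ Finset.Ioi s₁).card := by
      conv_lhs => rw [hdecomp₂]
      rw [Finset.card_union_of_disjoint hdisj₂, Fin.card_Iio]
    have hcover : Finset.Ioi s₁ ⊆ (M₁ ∩ Finset.Ioi s₁) ∪ (M₂ ∩ Finset.Ioi s₁) := by
      intro d hd
      have hdD : d ≠ D := by
        rw [← hsD]
        intro hc
        rw [hc] at hd
        exact absurd (Finset.mem_Ioi.mp hd) (lt_irrefl _)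
      rcases hunion d with hc | hc | hc
      · exact Finset.mem_union_left _ (Finset.mem_inter.mpr ⟨hc, hd⟩)
      · exact Finset.mem_union_right _ (Finset.mem_inter.mpr ⟨hc, hd⟩)
      · exact absurd hc hdD
    have hcov_card : N - 1 - (s₁ : ℕ) ≤
        (M₁ ∩ Finset.Ioi s₁).card + (M₂ ∩ Finset.Ioi s₁).card := by
      have := Finset.card_le_card hcover
      have h2' := Finset.card_union_le (M₁ ∩ Finset.Ioi s₁) (M₂ ∩ Finset.Ioi s₁)
      rw [Fin.card_Ioi] at this
      omega
    -- identify the movers of the extended half-segments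
    have hMov1 : Movers γ 0 (w + 1) = M₁ ∪ {D} := by
      ext d
      rw [mem_movers, Finset.mem_union, Finset.mem_singleton]
      constructor
      · rintro ⟨t, _, htw, hmv⟩
        rcases lt_or_eq_of_le (Nat.lt_succ_iff.mp htw) with hc | hc
        · exact Or.inl (mem_movers.mpr ⟨t, Nat.zero_le _, hc, hmv⟩)
        · subst hc; exact Or.inr (hstep_only d hmv)
      · rintro (hd | hd)
        · obtain ⟨t, h1', h2', h3'⟩ := mem_movers.mp hd
          exact ⟨t, h1', by omega, h3'⟩
        · subst hd; exact ⟨w, Nat.zero_le _, by omega, hD1⟩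
    have hMov2 : Movers γ w γ.len = M₂ ∪ {D} := by
      ext d
      rw [mem_movers, Finset.mem_union, Finset.mem_singleton]
      constructor
      · rintro ⟨t, htw, htL, hmv⟩
        rcases lt_or_eq_of_le htw with hc | hc
        · exact Or.inl (mem_movers.mpr ⟨t, by omega, htL, hmv⟩)
        · rw [← hc] at hmv; exact Or.inr (hstep_only d hmv)
      · rintro (hd | hd)
        · obtain ⟨t, h1', h2', h3'⟩ := mem_movers.mp hd
          exact ⟨t, by omega, h2', h3'⟩
        · subst hd; exact ⟨w, le_rfl, hwL, hD1⟩
    -- g1 must be certificate 1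
    have hg1 : N - l ≤ M₁.card + 1 := by
      rcases g1 with hg | ⟨s', hs', hcard'⟩
      · rw [hMov1] at hg
        have := Finset.card_union_le M₁ ({D} : Finset (Fin N))
        simp only [Finset.card_singleton] at this
        omega
      · exfalso
        have hs'M : s' ∉ Movers γ 0 (w + 1) := fun hc => hs' (mem_movers.mp hc)
        rw [hMov1, Finset.mem_union, Finset.mem_singleton] at hs'M
        push_neg at hs'M
        have hs'T : s' ∈ T₁ := Finset.mem_sdiff.mpr ⟨Finset.mem_univ _, hs'M.1⟩
        have hs'gt : s₁ < s' := by
          have hmin : s₁ ≤ s' := T₁.min'_le s' hs'T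
          rcases lt_or_eq_of_le hmin with hc | hc
          · exact hc
          · exact absurd (by rw [← hc]; exact hsD) hs'M.2
        have hsub' : Movers γ 0 (w + 1) ∩ Finset.Ioi s' ⊆ M₁ ∩ Finset.Ioi s₁ := by
          intro d hd
          rw [Finset.mem_inter, hMov1, Finset.mem_union, Finset.mem_singleton] at hd
          have hdgt : s₁ < d := lt_trans hs'gt (Finset.mem_Ioi.mp hd.2)
          have hdD : d ≠ D := by rw [← hsD]; exact ne_of_gt hdgt
          rcases hd.1 with hc | hc
          · exact Finset.mem_inter.mpr ⟨hc, Finset.mem_Ioi.mpr hdgt⟩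
          · exact absurd hc hdD
        have := Finset.card_le_card hsub'
        omega
    have hg2 : N - l ≤ M₂.card + 1 := by
      rcases g2 with hg | ⟨s', hs', hcard'⟩
      · rw [hMov2] at hg
        have := Finset.card_union_le M₂ ({D} : Finset (Fin N))
        simp only [Finset.card_singleton] at this
        omega
      · exfalso
        have hs'M : s' ∉ Movers γ w γ.len := fun hc => hs' (mem_movers.mp hc)
        rw [hMov2, Finset.mem_union, Finset.mem_singleton] at hs'M
        push_neg at hs'M
        have hs'T : s' ∈ T₂ := Finset.mem_sdiff.mpr ⟨Finset.mem_univ _, hs'M.1⟩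
        have hs'gt : s₁ < s' := by
          have hmin : s₂ ≤ s' := T₂.min'_le s' hs'T
          rw [← h] at hmin
          rcases lt_or_eq_of_le hmin with hc | hc
          · exact hc
          · exact absurd (by rw [← hc]; exact hsD) hs'M.2
        have hsub' : Movers γ w γ.len ∩ Finset.Ioi s' ⊆ M₂ ∩ Finset.Ioi s₁ := by
          intro d hd
          rw [Finset.mem_inter, hMov2, Finset.mem_union, Finset.mem_singleton] at hd
          have hdgt : s₁ < d := lt_trans hs'gt (Finset.mem_Ioi.mp hd.2)
          have hdD : d ≠ D := by rw [← hsD]; exact ne_of_gt hdgt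
          rcases hd.1 with hc | hc
          · exact Finset.mem_inter.mpr ⟨hc, Finset.mem_Ioi.mpr hdgt⟩
          · exact absurd hc hdD
        have := Finset.card_le_card hsub'
        omega
    have hb1 := h1.1
    have hb2 := h2.1
    have hsN : (s₁ : ℕ) < N := s₁.isLt
    omega
  · -- s₂ < s₁
    have hsub : T₁ \ {D} ⊆ M₂ ∩ Finset.Ioi s₂ := by
      intro d hd
      rw [Finset.mem_sdiff, Finset.mem_singleton] at hd
      have hdM₁ : d ∉ M₁ := (Finset.mem_sdiff.mp hd.1).2
      have hdM₂ : d ∈ M₂ := by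
        rcases hunion d with hc | hc | hc
        · exact absurd hc hdM₁
        · exact hc
        · exact absurd hc hd.2
      exact Finset.mem_inter.mpr ⟨hdM₂, Finset.mem_Ioi.mpr
        (lt_of_lt_of_le h (T₁.min'_le d hd.1))⟩
    have hle := Finset.card_le_card hsub
    have hle2 : T₁.card ≤ (T₁ \ {D}).card + 1 := by
      have := Finset.card_le_card_sdiff_add_card (s := T₁) (t := {D})
      simpa using this
    have hlt := h2.2 s₂ hstat₂
    omega

end Comb2

section Exists
variable {p : ℕ}

/-- Add a largest disk, fixed on peg `x`. -/
def addBig {N : ℕ} (x : Fin p) (u : Conf p N) : Conf p (N + 1) :=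
  fun e => if h : (e : ℕ) < N then u ⟨e, h⟩ else x

lemma isMove_addBig {N : ℕ} {x : Fin p} {u v : Conf p N} (h : IsMove u v) :
    IsMove (addBig x u) (addBig x v) := by
  obtain ⟨d, h1, h2, h3⟩ := h
  refine ⟨⟨d, by omega⟩, ?_, ?_, ?_⟩
  · simpa [addBig, d.isLt] using h1
  · intro e he
    by_cases hc : (e : ℕ) < N
    · have : (⟨(e : ℕ), hc⟩ : Fin N) ≠ d := by
        intro hh
        apply he
        apply Fin.ext
        simpa using congrArg Fin.val hh
      simpa [addBig, hc] using h2 _ this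
    · simp [addBig, hc]
  · intro e he
    have hd : ((⟨(d : ℕ), by omega⟩ : Fin (N + 1)) : ℕ) = (d : ℕ) := rfl
    rw [hd] at he
    have heN : (e : ℕ) < N := lt_trans he d.isLt
    have := h3 ⟨e, heN⟩ he
    constructor
    · simpa [addBig, heN, d.isLt] using this.1
    · simpa [addBig, heN, d.isLt] using this.2

/-- The standard recursive tower-of-Hanoi solution, as a list of configurations. -/
def solveL (x y z : Fin p) : (N : ℕ) → List (Conf p N)
  | 0 => [Fin.elim0]
  | N + 1 => ((solveL x z y N).map (addBig x)) ++ ((solveL z y x N).map (addBig y))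

lemma solveL_ne_nil (x y z : Fin p) (N : ℕ) : solveL x y z N ≠ [] := by
  cases N with
  | zero => simp [solveL]
  | succ n =>
    simp only [solveL, ne_eq, List.append_eq_nil_iff, List.map_eq_nil_iff, not_and]
    intro h
    exact absurd h (solveL_ne_nil x z y n)

lemma solveL_head (x y z : Fin p) (N : ℕ) :
    (solveL x y z N).head? = some (fun _ => x) := by
  induction N generalizing x y z with
  | zero =>
    simp only [solveL, List.head?_cons]
    exact congrArg some (funext fun i => i.elim0)
  | succ n ih =>
    simp only [solveL]
    rw [List.head?_append_of_ne_nil]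
    · rw [List.head?_map, ih x z y]
      show some _ = _
      congr 1
      funext e
      simp [addBig]
    · simp only [ne_eq, List.map_eq_nil_iff]
      exact solveL_ne_nil x z y n

lemma solveL_getLast (x y z : Fin p) (N : ℕ) :
    (solveL x y z N).getLast? = some (fun _ => y) := by
  induction N generalizing x y z with
  | zero =>
    simp only [solveL, List.getLast?_singleton]
    exact congrArg some (funext fun i => i.elim0)
  | succ n ih =>
    simp only [solveL]
    rw [List.getLast?_append_of_ne_nil]
    · rw [List.getLast?_map, ih z y x]
      show some _ = _
      congr 1
      funext e
      simp [addBig]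
    · simp only [ne_eq, List.map_eq_nil_iff]
      exact solveL_ne_nil z y x n

lemma solveL_chain (x y z : Fin p) (hxy : x ≠ y) (hyz : y ≠ z) (hxz : x ≠ z) (N : ℕ) :
    List.Chain' IsMove (solveL x y z N) := by
  induction N generalizing x y z with
  | zero => exact List.isChain_singleton _
  | succ n ih =>
    simp only [solveL, List.Chain']
    rw [List.isChain_append]
    refine ⟨?_, ?_, ?_⟩
    · rw [List.isChain_map]
      exact List.IsChain.imp (fun _ _ h => isMove_addBig h) (ih x z y hxz (Ne.symm hyz) hxy)
    · rw [List.isChain_map]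
      exact List.IsChain.imp (fun _ _ h => isMove_addBig h) (ih z y x (Ne.symm hyz) (Ne.symm hxy) (Ne.symm hxz))
    · intro A hA B hB
      rw [List.getLast?_map, solveL_getLast x z y n] at hA
      erw [Option.map_some] at hA
      rw [Option.mem_def, Option.some.injEq] at hA
      rw [List.head?_map, solveL_head z y x n] at hB
      erw [Option.map_some] at hB
      rw [Option.mem_def, Option.some.injEq] at hB
      subst hA hB
      refine ⟨⟨n, by omega⟩, ?_, ?_, ?_⟩
      · simp [addBig, hxy]
      · intro e he
        have heN : (e : ℕ) < n := by
          have := e.isLt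
          have : (e : ℕ) ≠ n := fun hc => he (Fin.ext (by simpa using hc))
          omega
        simp [addBig, heN]
      · intro e he
        have heN : (e : ℕ) < n := he
        constructor
        · simp [addBig, heN, Ne.symm hxz]
        · simp [addBig, heN, Ne.symm hyz]

/-- `H(p, N)` contains an essential path whenever `p ≥ 3`. -/
lemma exists_essential (hp : 3 ≤ p) (N : ℕ) :
    ∃ γ : HanoiPath p N, Essential γ := by
  classical
  set x : Fin p := ⟨0, by omega⟩
  set y : Fin p := ⟨1, by omega⟩
  set z : Fin p := ⟨2, by omega⟩
  have hxy : x ≠ y := by simp [x, y, Fin.ext_iff]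
  have hyz : y ≠ z := by simp [y, z, Fin.ext_iff]
  have hxz : x ≠ z := by simp [x, z, Fin.ext_iff]
  set c := solveL x y z N with hcdef
  have hne : c ≠ [] := solveL_ne_nil x y z N
  have hch : List.Chain' IsMove c := solveL_chain x y z hxy hyz hxz N
  set dflt : Conf p N := fun _ => x with hdflt
  have hlenpos : 0 < c.length := List.length_pos_iff.mpr hne
  refine ⟨⟨c.length - 1, fun t => c.getD t (c.getLast hne), ?_⟩, ?_⟩
  · intro t ht
    have h1 : t < c.length := by omega
    have h2 : t + 1 < c.length := by omega
    show IsMove (c.getD t (c.getLast hne)) (c.getD (t + 1) (c.getLast hne))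
    rw [List.getD_eq_getElem _ _ h1, List.getD_eq_getElem _ _ h2]
    have := List.isChain_iff_getElem.mp hch t (by omega)
    simpa [List.get_eq_getElem] using this
  · intro d
    by_contra hcon
    push_neg at hcon
    have hconst : ∀ t, t ≤ c.length - 1 →
        (c.getD t (c.getLast hne)) d = (c.getD 0 (c.getLast hne)) d := by
      intro t ht
      induction t with
      | zero => rfl
      | succ u ihu =>
        rw [← ihu (by omega)]
        exact (hcon u (by show u < c.length - 1; omega)).symm
    have hhead : c.head hne = fun _ => x := by
      have h1 := solveL_head x y z N
      rw [← hcdef, List.head?_eq_head hne] at h1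
      injection h1
    have hlast : c.getLast hne = fun _ => y := by
      have h1 := solveL_getLast x y z N
      rw [← hcdef, List.getLast?_eq_getLast hne] at h1
      injection h1
    have h0 : c.getD 0 (c.getLast hne) = fun _ => x := by
      rw [List.getD_eq_getElem _ _ hlenpos, ← hhead]
      exact (List.head_eq_getElem (l := c) hne).symm
    have hL : c.getD (c.length - 1) (c.getLast hne) = fun _ => y := by
      rw [List.getD_eq_getElem _ _ (by omega), ← hlast]
      exact (List.getLast_eq_getElem (l := c) hne).symm
    have hfin := hconst (c.length - 1) le_rfl
    rw [h0, hL] at hfin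
    have hyx : y = x := by simpa using hfin
    exact hxy hyx.symm
end Exists


/-- For `p ≥ 4`, `N ≥ 2` and `1 ≤ ℓ ≤ N−1`,
`Γ(p, N) ≥ 2·min{Γ(p, N−ℓ), Γ(p−1, ℓ)}`. -/
theorem gamma_recursive (p N l : ℕ) (hp : 4 ≤ p) (hN : 2 ≤ N)
    (hl : 1 ≤ l) (hl' : l ≤ N - 1) :
    HanoiGamma p N ≥ 2 * min (HanoiGamma p (N - l)) (HanoiGamma (p - 1) l) := by
  classical
  have hlN : l + 1 ≤ N := by omega
  set m := min (HanoiGamma p (N - l)) (HanoiGamma (p - 1) l) with hm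
  rw [ge_iff_le, HanoiGamma]
  refine le_csInf ?_ ?_
  · obtain ⟨γ, hγ⟩ := exists_essential (p := p) (by omega) N
    exact ⟨γ.len, γ, rfl, hγ⟩
  rintro L ⟨γ, rfl, hess⟩
  have hLgood : Good γ l 0 γ.len := by
    left
    have huniv : Movers γ 0 γ.len = Finset.univ := by
      apply Finset.eq_univ_iff_forall.mpr
      intro d
      obtain ⟨t, ht, hmv⟩ := hess d
      exact mem_movers.mpr ⟨t, Nat.zero_le _, ht, hmv⟩
    rw [huniv, Finset.card_univ, Fintype.card_fin]
    omega
  have hPex : ∃ t, t ≤ γ.len ∧ Good γ l 0 t := ⟨γ.len, le_rfl, hLgood⟩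
  set t₀ := Nat.find hPex with ht₀def
  obtain ⟨ht₀L, ht₀good⟩ := Nat.find_spec hPex
  set u₀ := Nat.findGreatest (fun u => Good γ l u γ.len) γ.len with hu₀def
  have hu₀good : Good γ l u₀ γ.len := by
    rw [hu₀def]
    exact Nat.findGreatest_spec (P := fun u => Good γ l u γ.len) (m := 0)
      (Nat.zero_le _) hLgood
  have hu₀L : u₀ ≤ γ.len := Nat.findGreatest_le _
  have hmt₀ : m ≤ t₀ := by
    have h := good_len γ hp (Nat.zero_le _) ht₀L ht₀good
    rw [Nat.sub_zero] at h
    exact h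
  have hmu₀ : m ≤ γ.len - u₀ := good_len γ hp hu₀L le_rfl hu₀good
  have hkey : t₀ ≤ u₀ := by
    by_contra hcon
    push_neg at hcon
    rcases eq_or_lt_of_le (Nat.succ_le_of_lt hcon) with heq | hlt
    · have hwL : u₀ < γ.len := by omega
      have hb1 : ¬ Good γ l 0 u₀ := by
        have hmin := Nat.find_min hPex (show u₀ < t₀ from hcon)
        intro hg
        exact hmin ⟨by omega, hg⟩
      have hb2 : ¬ Good γ l (u₀ + 1) γ.len :=
        Nat.findGreatest_is_greatest (P := fun u => Good γ l u γ.len) (n := γ.len)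
          (by omega) (by omega)
      have hg1 : Good γ l 0 (u₀ + 1) := by
        have heq' : u₀ + 1 = t₀ := heq
        rw [heq']
        exact ht₀good
      exact no_double_bad' γ hess hl hlN u₀ hwL hb1 hb2 hg1 hu₀good
    · have hb1 : ¬ Good γ l 0 (t₀ - 1) := by
        have hmin := Nat.find_min hPex (show t₀ - 1 < t₀ by omega)
        intro hg
        exact hmin ⟨by omega, hg⟩
      have hb2 : ¬ Good γ l (t₀ - 1) γ.len :=
        Nat.findGreatest_is_greatest (P := fun u => Good γ l u γ.len) (n := γ.len)
          (by omega) (by omega)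
      exact no_double_bad γ hess hl hlN (t₀ - 1) (by omega) hb1 hb2
  omega
end
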